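/- Let k be an algebraically closed field and Λ a finite-dimensional k-algebra. For a finite-dimensional Λ-module M and a natural number i, let f_i(M) be the maximum of dim_k N over all submodules N of M that are generated by at most i elements. If M and N are finite-dimensional Λ-modules with M ≤_deg N, then f_i(M) ≥ f_i(N) for all i. -/

import Mathlib

open TensorProduct

/-- A witness that `M` degenerates to `N` over `R`: a finite-dimensional `R`-module `X`
together with a short exact sequence `0 → X → X ⊕ M → N → 0` of `R`-modules. -/
structure DegenerationWitness (k R M N : Type) [Field k] [Ring R] [Algebra k R]
    [AddCommGroup M] [AddCommGroup N] [Module R M] [Module R N] where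
  X : Type
  [instAddX : AddCommGroup X]
  [instModkX : Module k X]
  [instModRX : Module R X]
  [instTowerX : IsScalarTower k R X]
  [instFinX : FiniteDimensional k X]
  f : X →ₗ[R] X × M
  g : X × M →ₗ[R] N
  f_inj : Function.Injective f
  g_surj : Function.Surjective g
  exact : LinearMap.range f = LinearMap.ker g

/-- `M` degenerates to `N` over `R` (`M ≤_deg N`). -/
def Degenerates (k R M N : Type) [Field k] [Ring R] [Algebra k R]
    [AddCommGroup M] [AddCommGroup N] [Module R M] [Module R N] : Prop :=
  Nonempty (DegenerationWitness k R M N)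

/-- `f_i(M)`: the maximum of `dim_k N` over all `Λ`-submodules `N` of `M` generated by at
most `i` elements. -/
noncomputable def maxGenSubdim (k Λ M : Type) [Field k] [Ring Λ] [Algebra k Λ]
    [AddCommGroup M] [Module k M] [Module Λ M] [IsScalarTower k Λ M] (i : ℕ) : ℕ :=
  sSup {d : ℕ | ∃ N : Submodule Λ M,
    (∃ s : Finset M, s.card ≤ i ∧ Submodule.span Λ (s : Set M) = N) ∧
    d = Module.finrank k (N.restrictScalars k)}

open Module

private theorem aux_finrank_map_add {K V V' : Type*} [Field K] [AddCommGroup V] [Module K V]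
    [AddCommGroup V'] [Module K V'] [FiniteDimensional K V]
    (φ : V →ₗ[K] V') (A : Submodule K V) :
    finrank K (A.map φ) + finrank K (A ⊓ LinearMap.ker φ : Submodule K V) = finrank K A := by
  have h := LinearMap.finrank_range_add_finrank_ker (φ.domRestrict A)
  rw [LinearMap.range_domRestrict, LinearMap.ker_domRestrict] at h
  have hker : Submodule.comap A.subtype (LinearMap.ker φ) =
      Submodule.comap A.subtype (A ⊓ LinearMap.ker φ) := by
    rw [Submodule.comap_inf, Submodule.comap_subtype_self, top_inf_eq]
  rw [hker] at h
  rwa [LinearEquiv.finrank_eq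
    (Submodule.comapSubtypeEquivOfLe (inf_le_left : A ⊓ LinearMap.ker φ ≤ A))] at h

private theorem aux_inv {K V : Type*} [Field K] [AddCommGroup V] [Module K V]
    [FiniteDimensional K V] (a : V →ₗ[K] V) :
    ∃ Q : Polynomial K, Q ≠ 0 ∧ ∀ t : K, Q.eval t ≠ 0 →
      Function.Bijective (a - t • (LinearMap.id : V →ₗ[K] V)) := by
  classical
  set b := Module.finBasis K V with hb
  set A := LinearMap.toMatrix b b a with hA
  refine ⟨A.charpoly, A.charpoly_monic.ne_zero, fun t ht => ?_⟩
  have heval : A.charpoly.eval t = (t • (1 : Matrix _ _ K) - A).det := by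
    have h1 : A.charpoly.eval t
        = ((Polynomial.evalRingHom t).mapMatrix (Matrix.charmatrix A)).det := by
      rw [Matrix.charpoly, ← RingHom.map_det]
      rfl
    rw [h1, RingHom.mapMatrix_apply]
    congr 1
    ext i j
    by_cases hij : i = j <;>
      simp [Matrix.charmatrix_apply, hij, Matrix.one_apply, Matrix.diagonal_apply,
        Matrix.smul_apply, Matrix.map_apply]
  have hdet : LinearMap.det (t • (LinearMap.id : V →ₗ[K] V) - a) ≠ 0 := by
    rw [← LinearMap.det_toMatrix b, map_sub, map_smul, LinearMap.toMatrix_id]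
    rw [heval] at ht
    exact ht
  have hbij : Function.Bijective (t • (LinearMap.id : V →ₗ[K] V) - a) := by
    have h2 := ((t • (LinearMap.id : V →ₗ[K] V) - a).equivOfDetNeZero hdet).bijective
    have hco : ⇑((t • (LinearMap.id : V →ₗ[K] V) - a).equivOfDetNeZero hdet)
        = ⇑(t • (LinearMap.id : V →ₗ[K] V) - a) :=
      funext fun x => LinearEquiv.ofIsUnitDet_apply _ x
    rwa [hco] at h2
  have hneg : a - t • (LinearMap.id : V →ₗ[K] V)
      = -(t • (LinearMap.id : V →ₗ[K] V) - a) := (neg_sub _ _).symm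
  rw [hneg]
  have : ⇑(-(t • (LinearMap.id : V →ₗ[K] V) - a)) =
      (fun x => -x) ∘ ⇑(t • (LinearMap.id : V →ₗ[K] V) - a) := by
    funext x; simp
  rw [this]
  exact neg_involutive.bijective.comp hbij

private theorem aux_semicont {K V W : Type*} [Field K] [AddCommGroup V] [Module K V]
    [AddCommGroup W] [Module K W] [FiniteDimensional K V] [FiniteDimensional K W]
    (L D : V →ₗ[K] W) :
    ∃ P : Polynomial K, P ≠ 0 ∧ ∀ t : K, P.eval t ≠ 0 →
      finrank K (LinearMap.range L) ≤ finrank K (LinearMap.range (L + t • D)) := by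
  classical
  obtain ⟨V₀, hc⟩ := (LinearMap.ker L).exists_isCompl
  have hinj : Function.Injective (L ∘ₗ V₀.subtype) := by
    rw [← LinearMap.ker_eq_bot, LinearMap.ker_comp, Submodule.eq_bot_iff]
    rintro x hx
    have h1 : (x : V) ∈ LinearMap.ker L ⊓ V₀ := ⟨hx, x.2⟩
    rw [hc.inf_eq_bot] at h1
    exact Subtype.ext h1
  have hrange0 : LinearMap.range (L ∘ₗ V₀.subtype) = LinearMap.range L := by
    apply le_antisymm (LinearMap.range_comp_le_range _ _)
    rintro _ ⟨x, rfl⟩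
    have hx : x ∈ LinearMap.ker L ⊔ V₀ := by rw [hc.sup_eq_top]; trivial
    obtain ⟨y, hy, z, hz, rfl⟩ := Submodule.mem_sup.mp hx
    refine ⟨⟨z, hz⟩, ?_⟩
    have : L y = 0 := hy
    simp [this]
  have hfr : finrank K V₀ = finrank K (LinearMap.range L) := by
    rw [← hrange0]
    exact (LinearMap.finrank_range_of_inj hinj).symm
  obtain ⟨U', hU'⟩ := (LinearMap.range L).exists_isCompl
  set π := Submodule.linearProjOfIsCompl _ _ hU' with hπdef
  set e : (LinearMap.range L) ≃ₗ[K] V₀ := LinearEquiv.ofFinrankEq _ _ hfr.symm with he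
  set J : (V →ₗ[K] W) → (V₀ →ₗ[K] V₀) :=
    fun φ => e.toLinearMap ∘ₗ π ∘ₗ φ ∘ₗ V₀.subtype with hJ
  have hJadd : ∀ t : K, J (L + t • D) = J L + t • J D := by
    intro t; ext x; simp [hJ]
  have hJ0inj : Function.Injective (J L) := by
    intro x y hxy
    apply hinj
    have h2 : π ((L ∘ₗ V₀.subtype) x) = π ((L ∘ₗ V₀.subtype) y) := by
      apply e.injective
      simpa [hJ] using hxy
    have hmem : ∀ z : V₀, (L ∘ₗ V₀.subtype) z ∈ LinearMap.range L :=
      fun z => ⟨V₀.subtype z, rfl⟩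
    have h3 : ∀ z : V₀, π ((L ∘ₗ V₀.subtype) z) = ⟨(L ∘ₗ V₀.subtype) z, hmem z⟩ :=
      fun z => Submodule.linearProjOfIsCompl_apply_left hU' ⟨(L ∘ₗ V₀.subtype) z, hmem z⟩
    rw [h3 x, h3 y] at h2
    exact congrArg Subtype.val h2
  have hbij : Function.Bijective (J L) :=
    ⟨hJ0inj, (LinearMap.injective_iff_surjective).mp hJ0inj⟩
  have hdet0 : LinearMap.det (J L) ≠ 0 := by
    have h4 := (LinearEquiv.ofBijective (J L) hbij).isUnit_det'
    have h5 : ((LinearEquiv.ofBijective (J L) hbij : V₀ ≃ₗ[K] V₀) : V₀ →ₗ[K] V₀) = J L := rfl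
    rw [h5] at h4
    exact h4.ne_zero
  set b := Module.finBasis K V₀ with hbb
  set A := LinearMap.toMatrix b b (J L) with hAA
  set B := LinearMap.toMatrix b b (J D) with hBB
  set P : Polynomial K :=
    (A.map Polynomial.C + (Polynomial.X : Polynomial K) • B.map Polynomial.C).det with hP
  have hPeval : ∀ t : K, P.eval t = LinearMap.det (J (L + t • D)) := by
    intro t
    have h1 : P.eval t = ((Polynomial.evalRingHom t).mapMatrix
        (A.map Polynomial.C + (Polynomial.X : Polynomial K) • B.map Polynomial.C)).det := by
      rw [hP, ← RingHom.map_det]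
      rfl
    have h2 : (Polynomial.evalRingHom t).mapMatrix
        (A.map Polynomial.C + (Polynomial.X : Polynomial K) • B.map Polynomial.C)
        = A + t • B := by
      ext i j
      simp only [RingHom.mapMatrix_apply, Matrix.map_apply, Matrix.add_apply, Matrix.smul_apply,
        smul_eq_mul, Polynomial.coe_evalRingHom, Polynomial.eval_add, Polynomial.eval_mul,
        Polynomial.eval_X, Polynomial.eval_C]
    rw [h1, h2, hJadd, ← LinearMap.det_toMatrix b, map_add, map_smul]
  have hP0 : P ≠ 0 := by
    intro h
    have h6 := hPeval 0
    rw [h] at h6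
    simp only [Polynomial.eval_zero] at h6
    have h7 : J (L + (0:K) • D) = J L := by rw [zero_smul, add_zero]
    rw [h7] at h6
    exact hdet0 h6.symm
  refine ⟨P, hP0, fun t ht => ?_⟩
  have hdet : LinearMap.det (J (L + t • D)) ≠ 0 := by rw [← hPeval]; exact ht
  have hJt : Function.Injective (J (L + t • D)) := by
    have h8 := ((J (L + t • D)).equivOfDetNeZero hdet).injective
    have hco : ⇑((J (L + t • D)).equivOfDetNeZero hdet) = ⇑(J (L + t • D)) :=
      funext fun x => LinearEquiv.ofIsUnitDet_apply _ x
    rwa [hco] at h8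
  have hcomp : Function.Injective ((L + t • D) ∘ₗ V₀.subtype) := by
    intro x y hxy
    apply hJt
    simp only [hJ, LinearMap.comp_apply] at hxy ⊢
    rw [hxy]
  calc finrank K (LinearMap.range L) = finrank K V₀ := hfr.symm
    _ = finrank K (LinearMap.range ((L + t • D) ∘ₗ V₀.subtype)) :=
        (LinearMap.finrank_range_of_inj hcomp).symm
    _ ≤ finrank K (LinearMap.range (L + t • D)) :=
        Submodule.finrank_mono (LinearMap.range_comp_le_range _ _)

private theorem aux_rs_map {k Λ V V' : Type*} [Field k] [Ring Λ] [Algebra k Λ]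
    [AddCommGroup V] [Module k V] [Module Λ V] [IsScalarTower k Λ V]
    [AddCommGroup V'] [Module k V'] [Module Λ V'] [IsScalarTower k Λ V']
    (φ : V →ₗ[Λ] V') (U : Submodule Λ V) :
    (U.map φ).restrictScalars k = (U.restrictScalars k).map (φ.restrictScalars k) := by
  ext x
  simp [Submodule.mem_map]

/-- Let `k` be an algebraically closed field and `Λ` a finite-dimensional
`k`-algebra.  If `M` and `N` are finite-dimensional `Λ`-modules with `M ≤_deg N`, then
`f_i(M) ≥ f_i(N)` for all `i`, where `f_i` is the maximal `k`-dimension of a submodule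
generated by at most `i` elements. -/
theorem maxGenSubdim_le_of_degenerates
    (k Λ : Type) [Field k] [IsAlgClosed k] [Ring Λ] [Algebra k Λ] [FiniteDimensional k Λ]
    (M N : Type) [AddCommGroup M] [AddCommGroup N] [Module k M] [Module k N]
    [Module Λ M] [Module Λ N] [IsScalarTower k Λ M] [IsScalarTower k Λ N]
    [FiniteDimensional k M] [FiniteDimensional k N]
    (h : Degenerates k Λ M N) :
    ∀ i : ℕ, maxGenSubdim k Λ N i ≤ maxGenSubdim k Λ M i := by
  intro i
  obtain ⟨w⟩ := h
  letI := w.instAddX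
  letI := w.instModkX
  letI := w.instModRX
  letI := w.instTowerX
  letI := w.instFinX
  classical
  have hbddM : BddAbove {d : ℕ | ∃ N' : Submodule Λ M,
      (∃ s : Finset M, s.card ≤ i ∧ Submodule.span Λ (s : Set M) = N') ∧
      d = Module.finrank k (N'.restrictScalars k)} := by
    refine ⟨Module.finrank k M, ?_⟩
    rintro d ⟨N', -, rfl⟩
    exact Submodule.finrank_le (N'.restrictScalars k)
  unfold maxGenSubdim
  have hne : (0:ℕ) ∈ {d : ℕ | ∃ N' : Submodule Λ N,
      (∃ s : Finset N, s.card ≤ i ∧ Submodule.span Λ (s : Set N) = N') ∧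
      d = Module.finrank k (N'.restrictScalars k)} :=
    ⟨⊥, ⟨∅, by simp, by simp⟩, by simp; exact (finrank_bot k N).symm⟩
  apply csSup_le ⟨0, hne⟩
  rintro d ⟨N', ⟨s, hs, hspan⟩, rfl⟩
  -- the maps α, β
  set α : w.X →ₗ[Λ] w.X := (LinearMap.fst Λ w.X M) ∘ₗ w.f with hα
  set β : w.X →ₗ[Λ] M := (LinearMap.snd Λ w.X M) ∘ₗ w.f with hβ
  -- lifts of the generators
  set ℓ : N → w.X × M := Function.surjInv w.g_surj with hℓ
  set S : Finset (w.X × M) := s.image ℓ with hS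
  set Wm : Submodule Λ (w.X × M) := Submodule.span Λ (S : Set (w.X × M)) with hWm
  have hgW : Wm.map w.g = N' := by
    rw [hWm, Submodule.map_span, ← hspan]
    congr 1
    rw [hS, Finset.coe_image, Set.image_image]
    have hgl : ∀ x : N, w.g (ℓ x) = x := fun x => Function.surjInv_eq w.g_surj x
    simp [hgl]
  -- choose a good parameter t
  obtain ⟨Q, hQ0, hQ⟩ := aux_inv (α.restrictScalars k)
  set A : Submodule k (w.X × M) := Wm.restrictScalars k with hA
  set L : (↥A × w.X) →ₗ[k] w.X × M :=
    LinearMap.coprod A.subtype (w.f.restrictScalars k) with hL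
  set Dm : (↥A × w.X) →ₗ[k] w.X × M :=
    LinearMap.coprod 0 (-(LinearMap.inl k w.X M)) with hDm
  obtain ⟨P, hP0, hP⟩ := aux_semicont L Dm
  obtain ⟨t, htP, htQ⟩ : ∃ t : k, P.eval t ≠ 0 ∧ Q.eval t ≠ 0 := by
    have hfin := Polynomial.finite_setOf_isRoot (mul_ne_zero hP0 hQ0)
    obtain ⟨t, ht⟩ := hfin.infinite_compl.nonempty
    have hPQ : (P * Q).eval t ≠ 0 := fun hc => ht hc
    rw [Polynomial.eval_mul] at hPQ
    exact ⟨t, fun hc => hPQ (by rw [hc, zero_mul]), fun hc => hPQ (by rw [hc, mul_zero])⟩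
  -- the twisted maps
  set σ : w.X →ₗ[Λ] w.X := α - t • (LinearMap.id : w.X →ₗ[Λ] w.X) with hσ
  have hbijσ : Function.Bijective σ := by
    have hco : ⇑σ = ⇑(α.restrictScalars k - t • (LinearMap.id : w.X →ₗ[k] w.X)) := by
      funext x
      simp [hσ]
    rw [hco]
    exact hQ t htQ
  set eσ : w.X ≃ₗ[Λ] w.X := LinearEquiv.ofBijective σ hbijσ with heσ
  set ρ : w.X →ₗ[Λ] w.X := (eσ.symm : w.X →ₗ[Λ] w.X) with hρ
  have hσρ : ∀ x, σ (ρ x) = x := fun x => eσ.apply_symm_apply x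
  have hρσ : ∀ x, ρ (σ x) = x := fun x => eσ.symm_apply_apply x
  set ft : w.X →ₗ[Λ] w.X × M := w.f - t • LinearMap.inl Λ w.X M with hft
  have hftapp : ∀ x, ft x = (σ x, β x) := by
    intro x
    have : ft x = w.f x - t • (x, 0) := rfl
    rw [this]
    ext
    · simp [hσ, hα]
    · simp [hβ]
  set qt : w.X × M →ₗ[Λ] M :=
    LinearMap.snd Λ w.X M - (β ∘ₗ ρ) ∘ₗ LinearMap.fst Λ w.X M with hqt
  have hqtapp : ∀ p : w.X × M, qt p = p.2 - β (ρ p.1) := fun p => rfl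
  have hqtker : LinearMap.ker qt = LinearMap.range ft := by
    ext p
    simp only [LinearMap.mem_ker, LinearMap.mem_range]
    constructor
    · intro hp
      rw [hqtapp, sub_eq_zero] at hp
      refine ⟨ρ p.1, ?_⟩
      rw [hftapp, hσρ]
      exact Prod.ext rfl hp.symm
    · rintro ⟨x, rfl⟩
      rw [hqtapp, hftapp]
      simp [hρσ]
  have hftinj : Function.Injective ft := by
    intro x y hxy
    apply hbijσ.injective
    have := congrArg Prod.fst ((hftapp x) ▸ (hftapp y) ▸ hxy)
    exact this
  -- the candidate submodule of M
  set M' : Submodule Λ M := Wm.map qt with hM'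
  set S' : Finset M := S.image qt with hS'
  have hS'card : S'.card ≤ i :=
    le_trans Finset.card_image_le (le_trans Finset.card_image_le hs)
  have hS'span : Submodule.span Λ (S' : Set M) = M' := by
    rw [hM', hWm, Submodule.map_span, hS', Finset.coe_image]
  -- dimension bookkeeping over k
  set gk := w.g.restrictScalars k with hgk
  set qtk := qt.restrictScalars k with hqtk
  set fk := w.f.restrictScalars k with hfk
  set ftk := ft.restrictScalars k with hftk
  have hinj_fk : Function.Injective fk := w.f_inj
  have hinj_ftk : Function.Injective ftk := hftinj
  have e1 : finrank k (N'.restrictScalars k)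
      + finrank k (A ⊓ LinearMap.ker gk : Submodule k (w.X × M)) = finrank k A := by
    have h1 := aux_finrank_map_add gk A
    have h2 : A.map gk = N'.restrictScalars k := by
      rw [hA, ← aux_rs_map, hgW]
    rwa [h2] at h1
  have e2 : finrank k (M'.restrictScalars k)
      + finrank k (A ⊓ LinearMap.ker qtk : Submodule k (w.X × M)) = finrank k A := by
    have h1 := aux_finrank_map_add qtk A
    have h2 : A.map qtk = M'.restrictScalars k := by
      rw [hA, ← aux_rs_map, hM']
    rwa [h2] at h1
  have hker_g : LinearMap.ker gk = LinearMap.range fk := by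
    ext x
    simp only [LinearMap.mem_ker, LinearMap.mem_range, hgk, hfk,
      LinearMap.restrictScalars_apply]
    rw [show (w.g x = 0) ↔ x ∈ LinearMap.ker w.g from Iff.rfl, ← w.exact]
    exact Iff.symm LinearMap.mem_range
  have hker_q : LinearMap.ker qtk = LinearMap.range ftk := by
    ext x
    simp only [LinearMap.mem_ker, LinearMap.mem_range, hqtk, hftk,
      LinearMap.restrictScalars_apply]
    rw [show (qt x = 0) ↔ x ∈ LinearMap.ker qt from Iff.rfl, hqtker]
    exact Iff.symm LinearMap.mem_range
  have e3 : finrank k (A ⊔ LinearMap.range fk : Submodule k (w.X × M))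
      + finrank k (A ⊓ LinearMap.range fk : Submodule k (w.X × M))
      = finrank k A + finrank k (LinearMap.range fk) :=
    Submodule.finrank_sup_add_finrank_inf_eq _ _
  have e4 : finrank k (A ⊔ LinearMap.range ftk : Submodule k (w.X × M))
      + finrank k (A ⊓ LinearMap.range ftk : Submodule k (w.X × M))
      = finrank k A + finrank k (LinearMap.range ftk) :=
    Submodule.finrank_sup_add_finrank_inf_eq _ _
  have e5 : finrank k (LinearMap.range fk) = finrank k w.X :=
    LinearMap.finrank_range_of_inj hinj_fk
  have e6 : finrank k (LinearMap.range ftk) = finrank k w.X :=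
    LinearMap.finrank_range_of_inj hinj_ftk
  have e7 : LinearMap.range L = A ⊔ LinearMap.range fk := by
    rw [hL, LinearMap.range_coprod, Submodule.range_subtype, hfk]
  have e8 : LinearMap.range (L + t • Dm) = A ⊔ LinearMap.range ftk := by
    have hLD : L + t • Dm = LinearMap.coprod A.subtype ftk := by
      apply LinearMap.ext
      rintro ⟨a, x⟩
      show L (a, x) + t • Dm (a, x) = _
      simp only [hL, hDm, hftk, hft, LinearMap.coprod_apply, LinearMap.restrictScalars_apply,
        LinearMap.zero_apply, LinearMap.neg_apply, LinearMap.inl_apply, LinearMap.sub_apply,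
        LinearMap.smul_apply, zero_add, smul_neg, sub_eq_add_neg, add_assoc,
        LinearMap.add_apply, hfk]
    rw [hLD, LinearMap.range_coprod, Submodule.range_subtype]
  have e9 : finrank k (A ⊔ LinearMap.range fk : Submodule k (w.X × M))
      ≤ finrank k (A ⊔ LinearMap.range ftk : Submodule k (w.X × M)) := by
    have := hP t htP
    rwa [e7, e8] at this
  have e10 : finrank k (A ⊓ LinearMap.ker gk : Submodule k (w.X × M))
      = finrank k (A ⊓ LinearMap.range fk : Submodule k (w.X × M)) := by rw [hker_g]
  have e11 : finrank k (A ⊓ LinearMap.ker qtk : Submodule k (w.X × M))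
      = finrank k (A ⊓ LinearMap.range ftk : Submodule k (w.X × M)) := by rw [hker_q]
  have hfinal : finrank k (N'.restrictScalars k) ≤ finrank k (M'.restrictScalars k) := by
    omega
  refine le_trans hfinal (le_csSup hbddM ?_)
  exact ⟨M', ⟨S', hS'card, hS'span⟩, rfl⟩
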